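/- arXiv:1504.04820 — 6 statements merged into one kernel-verified Lean document; each statement's English description precedes it below -/
import Mathlib

section
/- In a finite connected graph, if a vertex u is maximally distant from a vertex v but v is not maximally distant from u, then there exists a vertex v' such that u and v' are mutually maximally distant. Consequently, the boundary of G (the set of vertices maximally distant from some vertex) equals the set of vertices that are mutually maximally distant from some vertex. -/
open SimpleGraph

variable {V : Type*}

/-- `w` strongly resolves `u` and `v` in `G`. -/
def StronglyResolves (G : SimpleGraph V) (w u v : V) : Prop :=
  G.dist u w = G.dist u v + G.dist v w ∨ G.dist v w = G.dist v u + G.dist u w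

/-- `S` is a strong metric generator for `G`. -/
def IsStrongMetricGen (G : SimpleGraph V) (S : Set V) : Prop :=
  ∀ u v : V, u ≠ v → ∃ w ∈ S, StronglyResolves G w u v

/-- The simultaneous strong metric dimension of a family of graphs. -/
noncomputable def SdS (𝒢 : Set (SimpleGraph V)) : ℕ :=
  sInf {n | ∃ S : Set V, S.ncard = n ∧ ∀ G ∈ 𝒢, IsStrongMetricGen G S}

/-- The strong metric dimension of a single graph. -/
noncomputable def sdim (G : SimpleGraph V) : ℕ := SdS {G}

/-- `u` is maximally distant from `v` in `G`. -/
def MaxDistantFrom (G : SimpleGraph V) (u v : V) : Prop :=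
  ∀ w : V, G.Adj u w → G.dist v w ≤ G.dist v u

/-- `u` and `v` are mutually maximally distant in `G`. -/
def MutuallyMaxDistant (G : SimpleGraph V) (u v : V) : Prop :=
  MaxDistantFrom G u v ∧ MaxDistantFrom G v u

/-- The strong resolving graph of `G`. -/
def SRG (G : SimpleGraph V) : SimpleGraph V where
  Adj u v := u ≠ v ∧ MutuallyMaxDistant G u v
  symm := by
    constructor
    intro u v h
    exact ⟨h.1.symm, h.2.2, h.2.1⟩
  loopless := by constructor; intro u h; exact h.1 rfl

/-- The boundary of `G`: vertices mutually maximally distant from some vertex. -/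
def Boundary (G : SimpleGraph V) : Set V :=
  {u | ∃ v, MutuallyMaxDistant G u v}

/-- `S` is a vertex cover of `G`. -/
def IsVertexCover (G : SimpleGraph V) (S : Set V) : Prop :=
  ∀ u v : V, G.Adj u v → u ∈ S ∨ v ∈ S

/-- The vertex cover number. -/
noncomputable def vcNum (G : SimpleGraph V) : ℕ :=
  sInf {n | ∃ S : Set V, S.ncard = n ∧ _root_.IsVertexCover G S}

/-- A strong resolving cover: simultaneously a vertex cover and a strong metric generator. -/
def IsStrongResCover (G : SimpleGraph V) (S : Set V) : Prop :=
  _root_.IsVertexCover G S ∧ IsStrongMetricGen G S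

/-- The strong resolving cover number `β_s`. -/
noncomputable def betaS (G : SimpleGraph V) : ℕ :=
  sInf {n | ∃ S : Set V, S.ncard = n ∧ IsStrongResCover G S}

/-- `G` is 2-antipodal. -/
def TwoAntipodal (G : SimpleGraph V) : Prop :=
  ∀ x : V, ∃! y : V, G.dist x y = G.diam

/-- `v` is a leaf of `G` (degree one). -/
def IsLeaf (G : SimpleGraph V) (v : V) : Prop := ∃! w : V, G.Adj v w

lemma exists_mmd [Fintype V] (G : SimpleGraph V) (hG : G.Connected)
    (u v : V) (huv : MaxDistantFrom G u v) : ∃ v' : V, MutuallyMaxDistant G u v' := by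
  classical
  -- choose v' maximizing dist u v' among vertices w with MaxDistantFrom G u w
  have hne : ({w : V | MaxDistantFrom G u w}.toFinset).Nonempty := by
    refine ⟨v, ?_⟩; simp [huv]
  obtain ⟨w, hwmem, hwmax⟩ := Finset.exists_max_image _ (fun w => G.dist u w) hne
  simp only [Set.mem_toFinset, Set.mem_setOf_eq] at hwmem
  refine ⟨w, hwmem, ?_⟩
  intro z hz
  by_contra hlt
  push_neg at hlt
  -- z is a neighbor of w with dist u z > dist u w
  have hzw : G.dist z w ≤ 1 := by
    simpa using SimpleGraph.dist_le hz.symm.toWalk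
  have hMD : MaxDistantFrom G u z := by
    intro t ht
    calc G.dist z t ≤ G.dist z w + G.dist w t := hG.dist_triangle
    _ ≤ 1 + G.dist w t := by omega
    _ ≤ 1 + G.dist w u := by have := hwmem t ht; omega
    _ ≤ G.dist u z := by
        have h1 : G.dist w u = G.dist u w := SimpleGraph.dist_comm
        omega
    _ = G.dist z u := SimpleGraph.dist_comm
  have := hwmax z (by simp [hMD])
  omega

theorem stmt2 [Fintype V] (G : SimpleGraph V) (hG : G.Connected) :
    (∀ u v : V, MaxDistantFrom G u v → ¬ MaxDistantFrom G v u →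
      ∃ v' : V, MutuallyMaxDistant G u v') ∧
    {u : V | ∃ v, MaxDistantFrom G u v} = {u : V | ∃ v, MutuallyMaxDistant G u v} := by
  constructor
  · intro u v h _
    exact exists_mmd G hG u v h
  · ext u
    simp only [Set.mem_setOf_eq]
    constructor
    · rintro ⟨v, h⟩
      by_cases h2 : MaxDistantFrom G v u
      · exact ⟨v, h, h2⟩
      · exact exists_mmd G hG u v h
    · rintro ⟨v, h⟩
      exact ⟨v, h.1⟩
end

section
/- For any family 𝒢 = {G_1,…,G_k} of connected graphs on a common vertex set, the maximum of the individual strong metric dimensions is at most Sd_s(𝒢), and Sd_s(𝒢) is at most the minimum of (|∂(𝒢)|−1) and the sum of the individual strong metric dimensions, where ∂(𝒢) is the union of the boundaries of the graphs in 𝒢. -/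
open SimpleGraph

variable {V : Type*}

section Aux
variable [Fintype V]

lemma gen_univ (G : SimpleGraph V) : IsStrongMetricGen G Set.univ := by
  intro u v _
  exact ⟨v, Set.mem_univ v, Or.inl (by simp [SimpleGraph.dist_self])⟩

lemma lemA {G : SimpleGraph V} (hG : G.Connected) (u v : V) :
    ∃ w, MaxDistantFrom G w u ∧ G.dist u w = G.dist u v + G.dist v w := by
  classical
  set T := Finset.univ.filter (fun z => G.dist u z = G.dist u v + G.dist v z) with hTdef
  have hvT : v ∈ T := by simp [hTdef, SimpleGraph.dist_self]
  obtain ⟨w, hwT, hwmax⟩ := Finset.exists_max_image T (G.dist u) ⟨v, hvT⟩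
  rw [hTdef, Finset.mem_filter] at hwT
  refine ⟨w, ?_, hwT.2⟩
  intro z hadj
  by_contra h
  push_neg at h
  have h1 : G.dist u z ≤ G.dist u w + 1 := by
    have := hG.dist_triangle (u := u) (v := w) (w := z)
    rwa [(SimpleGraph.dist_eq_one_iff_adj).2 hadj] at this
  have h2 : G.dist v z ≤ G.dist v w + 1 := by
    have := hG.dist_triangle (u := v) (v := w) (w := z)
    rwa [(SimpleGraph.dist_eq_one_iff_adj).2 hadj] at this
  have h3 : G.dist u z ≤ G.dist u v + G.dist v z := hG.dist_triangle
  have hzT : z ∈ T := by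
    rw [hTdef, Finset.mem_filter]
    exact ⟨Finset.mem_univ z, by omega⟩
  exact absurd (hwmax z hzT) (by omega)

lemma lemB {G : SimpleGraph V} (hG : G.Connected) {w u : V} (h : MaxDistantFrom G w u) :
    w ∈ Boundary G := by
  obtain ⟨u', hu', hd⟩ := lemA hG w u
  refine ⟨u', ?_, hu'⟩
  intro z hadj
  have h1 : G.dist u' z ≤ G.dist u' u + G.dist u z := hG.dist_triangle
  have h2 : G.dist u z ≤ G.dist u w := h z hadj
  have c1 : G.dist w u' = G.dist u' w := SimpleGraph.dist_comm
  have c2 : G.dist w u = G.dist u w := SimpleGraph.dist_comm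
  have c3 : G.dist u u' = G.dist u' u := SimpleGraph.dist_comm
  omega

lemma lemC {G : SimpleGraph V} (hG : G.Connected) {u v : V} (huv : u ≠ v) :
    ∃ w₁ w₂, w₁ ∈ Boundary G ∧ w₂ ∈ Boundary G ∧ w₁ ≠ w₂ ∧
      StronglyResolves G w₁ u v ∧ StronglyResolves G w₂ u v := by
  obtain ⟨w₁, h1, hd1⟩ := lemA hG u v
  obtain ⟨w₂, h2, hd2⟩ := lemA hG v u
  refine ⟨w₁, w₂, lemB hG h1, lemB hG h2, ?_, Or.inl hd1, Or.inr hd2⟩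
  intro hne
  subst hne
  have hp : 0 < G.dist u v := hG.pos_dist_of_ne huv
  have c1 : G.dist v u = G.dist u v := SimpleGraph.dist_comm
  omega

lemma sdim_exists (G : SimpleGraph V) :
    ∃ S : Set V, S.ncard = sdim G ∧ IsStrongMetricGen G S := by
  have hne : {n | ∃ S : Set V, S.ncard = n ∧
      ∀ G' ∈ ({G} : Set (SimpleGraph V)), IsStrongMetricGen G' S}.Nonempty :=
    ⟨(Set.univ : Set V).ncard, Set.univ, rfl, fun G' _ => gen_univ G'⟩
  have := Nat.sInf_mem hne
  obtain ⟨S, hS, hgen⟩ := this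
  exact ⟨S, hS, hgen G rfl⟩

end Aux

theorem stmt7 [Fintype V] (𝒢 : Finset (SimpleGraph V)) (hconn : ∀ G ∈ 𝒢, G.Connected) :
    (∀ G ∈ 𝒢, sdim G ≤ SdS (𝒢 : Set (SimpleGraph V))) ∧
    SdS (𝒢 : Set (SimpleGraph V)) ≤
      min ((⋃ G ∈ 𝒢, Boundary G).ncard - 1) (∑ G ∈ 𝒢, sdim G) := by
  classical
  have hne : {n | ∃ S : Set V, S.ncard = n ∧
      ∀ G ∈ (𝒢 : Set (SimpleGraph V)), IsStrongMetricGen G S}.Nonempty :=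
    ⟨(Set.univ : Set V).ncard, Set.univ, rfl, fun G _ => gen_univ G⟩
  obtain ⟨S, hS, hgen⟩ := Nat.sInf_mem hne
  constructor
  · intro G hG
    apply Nat.sInf_le
    refine ⟨S, hS, fun G' hG' => ?_⟩
    rw [Set.mem_singleton_iff] at hG'
    subst hG'
    exact hgen G' (by exact_mod_cast hG)
  apply le_min
  · -- boundary bound
    by_cases hpair : ∃ u v : V, u ≠ v
    · by_cases hGne : 𝒢.Nonempty
      · obtain ⟨u₀, v₀, h₀⟩ := hpair
        obtain ⟨G₀, hG₀⟩ := hGne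
        obtain ⟨w₁, w₂, hb1, hb2, hneq, _, _⟩ := lemC (hconn G₀ hG₀) h₀
        have hxB : w₁ ∈ ⋃ G ∈ 𝒢, Boundary G := Set.mem_biUnion hG₀ hb1
        apply Nat.sInf_le
        refine ⟨(⋃ G ∈ 𝒢, Boundary G) \ {w₁}, ?_, ?_⟩
        · rw [Set.ncard_diff_singleton_of_mem hxB]
        · intro G hG u v huv
          have hG' : G ∈ 𝒢 := by exact_mod_cast hG
          obtain ⟨x₁, x₂, hx1, hx2, hxne, hr1, hr2⟩ := lemC (hconn G hG') huv
          by_cases hx : x₁ = w₁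
          · refine ⟨x₂, ⟨Set.mem_biUnion hG' hx2, ?_⟩, hr2⟩
            simp only [Set.mem_singleton_iff]
            intro h; exact hxne (hx.trans h.symm)
          · exact ⟨x₁, ⟨Set.mem_biUnion hG' hx1, by simpa using hx⟩, hr1⟩
      · rw [Finset.not_nonempty_iff_eq_empty] at hGne
        subst hGne
        have : SdS ((∅ : Finset (SimpleGraph V)) : Set (SimpleGraph V)) ≤ 0 :=
          Nat.sInf_le ⟨∅, by simp, fun G hG => by simp at hG⟩
        omega
    · push_neg at hpair
      have : SdS (𝒢 : Set (SimpleGraph V)) ≤ 0 :=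
        Nat.sInf_le ⟨∅, by simp, fun G _ u v huv => absurd (hpair u v) huv⟩
      omega
  · -- sum bound
    choose f hf1 hf2 using fun G : SimpleGraph V => sdim_exists G
    set T : Finset V := 𝒢.biUnion (fun G => (f G).toFinset) with hT
    have h1 : SdS (𝒢 : Set (SimpleGraph V)) ≤ ((T : Set V)).ncard := by
      apply Nat.sInf_le
      refine ⟨(T : Set V), rfl, ?_⟩
      intro G hG u v huv
      have hG' : G ∈ 𝒢 := by exact_mod_cast hG
      obtain ⟨w, hw, hr⟩ := hf2 G u v huv
      refine ⟨w, ?_, hr⟩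
      rw [Finset.mem_coe, hT]
      exact Finset.mem_biUnion.2 ⟨G, hG', Set.mem_toFinset.2 hw⟩
    have h2 : ((T : Set V)).ncard ≤ ∑ G ∈ 𝒢, sdim G := by
      rw [Set.ncard_coe_finset]
      calc T.card ≤ ∑ G ∈ 𝒢, (f G).toFinset.card := Finset.card_biUnion_le
        _ = ∑ G ∈ 𝒢, sdim G := Finset.sum_congr rfl fun G _ => by
            rw [← Set.ncard_eq_toFinset_card', hf1]
    exact h1.trans h2
end

section
/- Let 𝒢 be a family of connected graphs of order n ≥ 2 on a common vertex set. Then Sd_s(𝒢) ≤ n − Sϖ(𝒢), where Sϖ(𝒢) is the simultaneous twin-free clique number. Moreover, if every graph in 𝒢 has diameter two, then Sd_s(𝒢) = n − Sϖ(𝒢). -/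
open SimpleGraph

variable {V : Type*}

/-- `X` is a twin-free clique in `G`. -/
def IsTwinFreeClique (G : SimpleGraph V) (X : Set V) : Prop :=
  G.IsClique X ∧
    X.Pairwise (fun x y => insert x (G.neighborSet x) ≠ insert y (G.neighborSet y))

/-- The simultaneous twin-free clique number of a family. -/
noncomputable def SimTwinFreeCliqueNum (𝒢 : Set (SimpleGraph V)) : ℕ :=
  sSup {n | ∃ X : Set V, X.ncard = n ∧ ∀ G ∈ 𝒢, IsTwinFreeClique G X}

lemma aux_case (G : SimpleGraph V) (hc : G.Connected) (X : Set V)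
    (hcl : G.IsClique X) {u v w : V} (hu : u ∈ X) (hv : v ∈ X) (huv : u ≠ v)
    (hw : w ∈ insert u (G.neighborSet u)) (hw' : w ∉ insert v (G.neighborSet v)) :
    w ∈ Xᶜ ∧ G.dist v w = G.dist v u + G.dist u w := by
  have hadj : G.Adj u v := hcl hu hv huv
  have hwv : w ≠ v := fun h => hw' (h ▸ Set.mem_insert _ _)
  have hwu : w ≠ u := by
    rintro rfl
    exact hw' (Set.mem_insert_iff.2 (Or.inr hadj.symm))
  have hadjuw : G.Adj u w := by
    rcases Set.mem_insert_iff.1 hw with h | h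
    · exact absurd h hwu
    · exact h
  have hnadj : ¬ G.Adj v w := fun h => hw' (Set.mem_insert_iff.2 (Or.inr h))
  have hd1 : G.dist u w = 1 := dist_eq_one_iff_adj.2 hadjuw
  have hd2 : G.dist v u = 1 := dist_eq_one_iff_adj.2 hadj.symm
  have htri : G.dist v w ≤ G.dist v u + G.dist u w := hc.dist_triangle
  have hpos : 0 < G.dist v w := hc.pos_dist_of_ne hwv.symm
  have hne1 : G.dist v w ≠ 1 := fun h => hnadj (dist_eq_one_iff_adj.1 h)
  refine ⟨fun hwX => hnadj (hcl hv hwX hwv.symm), by omega⟩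

lemma lemA_s8 (G : SimpleGraph V) (hc : G.Connected) (X : Set V)
    (hX : IsTwinFreeClique G X) : IsStrongMetricGen G Xᶜ := by
  intro u v huv
  by_cases hu : u ∈ X
  · by_cases hv : v ∈ X
    · have hne := hX.2 hu hv huv
      by_cases hsub : insert u (G.neighborSet u) ⊆ insert v (G.neighborSet v)
      · have : ¬ insert v (G.neighborSet v) ⊆ insert u (G.neighborSet u) := by
          intro h; exact hne (Set.Subset.antisymm hsub h)
        rcases Set.not_subset.1 this with ⟨w, hw, hw'⟩
        obtain ⟨hwX, heq⟩ := aux_case G hc X hX.1 hv hu huv.symm hw hw'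
        exact ⟨w, hwX, Or.inl heq⟩
      · rcases Set.not_subset.1 hsub with ⟨w, hw, hw'⟩
        obtain ⟨hwX, heq⟩ := aux_case G hc X hX.1 hu hv huv hw hw'
        exact ⟨w, hwX, Or.inr heq⟩
    · exact ⟨v, hv, Or.inl (by simp [SimpleGraph.dist_self])⟩
  · exact ⟨u, hu, Or.inr (by simp [SimpleGraph.dist_self])⟩

lemma lemB_s8 (G : SimpleGraph V) (hc : G.Connected) (hd : G.diam = 2) (S : Set V)
    (hS : IsStrongMetricGen G S) : IsTwinFreeClique G Sᶜ := by
  have hbd : ∀ a b : V, G.dist a b ≤ 2 := by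
    intro a b
    have := G.dist_le_diam (G.ediam_ne_top_of_diam_ne_zero (by omega)) (u := a) (v := b)
    omega
  have key : ∀ u v : V, u ∈ Sᶜ → v ∈ Sᶜ → u ≠ v →
      G.Adj u v ∧ insert u (G.neighborSet u) ≠ insert v (G.neighborSet v) := by
    intro u v hu hv huv
    obtain ⟨w, hwS, hres⟩ := hS u v huv
    have hwu : w ≠ u := fun h => hu (h ▸ hwS)
    have hwv : w ≠ v := fun h => hv (h ▸ hwS)
    have p1 : 0 < G.dist u v := hc.pos_dist_of_ne huv
    have p2 : 0 < G.dist u w := hc.pos_dist_of_ne (Ne.symm hwu)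
    have p3 : 0 < G.dist v w := hc.pos_dist_of_ne (Ne.symm hwv)
    have b1 := hbd u v
    have b2 := hbd u w
    have b3 := hbd v w
    have hco : G.dist u v = G.dist v u := SimpleGraph.dist_comm
    rcases hres with h | h
    · have huv1 : G.dist u v = 1 := by omega
      have hvw1 : G.dist v w = 1 := by omega
      have huw2 : G.dist u w = 2 := by omega
      refine ⟨dist_eq_one_iff_adj.1 huv1, fun hset => ?_⟩
      have hwmem : w ∈ insert v (G.neighborSet v) :=
        Set.mem_insert_iff.2 (Or.inr (dist_eq_one_iff_adj.1 hvw1))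
      rw [← hset] at hwmem
      rcases Set.mem_insert_iff.1 hwmem with h' | h'
      · exact hwu h'
      · have := dist_eq_one_iff_adj.2 h'
        omega
    · have huv1 : G.dist v u = 1 := by omega
      have huw1 : G.dist u w = 1 := by omega
      have hvw2 : G.dist v w = 2 := by omega
      have huv1' : G.dist u v = 1 := by omega
      refine ⟨dist_eq_one_iff_adj.1 huv1', fun hset => ?_⟩
      have hwmem : w ∈ insert u (G.neighborSet u) :=
        Set.mem_insert_iff.2 (Or.inr (dist_eq_one_iff_adj.1 huw1))
      rw [hset] at hwmem
      rcases Set.mem_insert_iff.1 hwmem with h' | h'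
      · exact hwv h'
      · have := dist_eq_one_iff_adj.2 h'
        omega
  exact ⟨fun u hu v hv huv => (key u v hu hv huv).1,
    fun u hu v hv huv => (key u v hu hv huv).2⟩

theorem stmt8 [Fintype V] (𝒢 : Set (SimpleGraph V)) (hn : 2 ≤ Fintype.card V)
    (hconn : ∀ G ∈ 𝒢, G.Connected) :
    SdS 𝒢 ≤ Fintype.card V - SimTwinFreeCliqueNum 𝒢 ∧
    ((∀ G ∈ 𝒢, G.diam = 2) → SdS 𝒢 = Fintype.card V - SimTwinFreeCliqueNum 𝒢) := by
  classical
  set n := Fintype.card V with hndef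
  have hcardle : ∀ X : Set V, X.ncard ≤ n := by
    intro X
    have := Set.ncard_le_ncard (Set.subset_univ X) Set.finite_univ
    rwa [Set.ncard_univ, Nat.card_eq_fintype_card] at this
  have hcompl : ∀ X : Set V, X.ncard + Xᶜ.ncard = n := by
    intro X
    have := Set.ncard_add_ncard_compl X (Set.toFinite X) (Set.toFinite Xᶜ)
    rwa [Nat.card_eq_fintype_card] at this
  set T := {m | ∃ X : Set V, X.ncard = m ∧ ∀ G ∈ 𝒢, IsTwinFreeClique G X} with hT
  have hTne : T.Nonempty :=
    ⟨0, ∅, by simp, fun G _ => ⟨by simp, by simp⟩⟩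
  have hTbdd : BddAbove T := by
    refine ⟨n, fun m hm => ?_⟩
    obtain ⟨X, hXc, -⟩ := hm
    exact hXc ▸ hcardle X
  have hTmem : sSup T ∈ T := Nat.sSup_mem hTne hTbdd
  obtain ⟨X, hXc, hX⟩ := hTmem
  have hsim : SimTwinFreeCliqueNum 𝒢 = sSup T := rfl
  have part1 : SdS 𝒢 ≤ n - SimTwinFreeCliqueNum 𝒢 := by
    apply Nat.sInf_le
    refine ⟨Xᶜ, ?_, fun G hG => lemA_s8 G (hconn G hG) X (hX G hG)⟩
    have := hcompl X
    rw [hsim, ← hXc]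
    omega
  refine ⟨part1, fun hd => ?_⟩
  set U := {m | ∃ S : Set V, S.ncard = m ∧ ∀ G ∈ 𝒢, IsStrongMetricGen G S} with hU
  have hUne : U.Nonempty := by
    refine ⟨n, Set.univ, by rw [Set.ncard_univ, Nat.card_eq_fintype_card], ?_⟩
    intro G _ u v huv
    exact ⟨u, Set.mem_univ u, Or.inr (by simp [SimpleGraph.dist_self])⟩
  have hUmem : sInf U ∈ U := Nat.sInf_mem hUne
  obtain ⟨S, hSc, hSgen⟩ := hUmem
  have hSds : SdS 𝒢 = sInf U := rfl
  have hXle : n - SdS 𝒢 ≤ SimTwinFreeCliqueNum 𝒢 := by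
    rw [hsim]
    apply le_csSup hTbdd
    refine ⟨Sᶜ, ?_, fun G hG => lemB_s8 G (hconn G hG) (hd G hG) S (hSgen G hG)⟩
    have := hcompl S
    rw [hSds, ← hSc]
    omega
  have hSn : SdS 𝒢 ≤ n := by
    rw [hSds, ← hSc]; exact hcardle S
  omega
end

section
/- Let 𝒢 be a family of graphs of diameter two and order n ≥ 2 on a common vertex set. If 𝒢 contains a triangle-free graph, then n−2 ≤ Sd_s(𝒢) ≤ n−1. -/
open SimpleGraph

variable {V : Type*}

lemma gen_aux {V : Type*} (G : SimpleGraph V) (x : V) :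
    IsStrongMetricGen G ({x}ᶜ : Set V) := by
  intro u v huv
  by_cases hu : u = x
  · refine ⟨v, by simp; exact fun h => huv (hu.trans h.symm), Or.inl ?_⟩
    simp [SimpleGraph.dist_self]
  · refine ⟨u, by simp [hu], Or.inr ?_⟩
    simp [SimpleGraph.dist_self]

lemma adj_of_resolve {V : Type*} {G : SimpleGraph V} (hc : G.Connected) (hd : G.diam = 2)
    {u v w : V} (huv : u ≠ v) (hwu : w ≠ u) (hwv : w ≠ v)
    (h : StronglyResolves G w u v) : G.Adj u v := by
  have hne : G.ediam ≠ ⊤ := SimpleGraph.ediam_ne_top_of_diam_ne_zero (by omega)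
  have h1 : G.dist u w ≤ 2 := hd ▸ SimpleGraph.dist_le_diam hne
  have h2 : G.dist v w ≤ 2 := hd ▸ SimpleGraph.dist_le_diam hne
  have p1 : 0 < G.dist u v := hc.pos_dist_of_ne huv
  have p2 : 0 < G.dist v u := hc.pos_dist_of_ne huv.symm
  have p3 : 0 < G.dist v w := hc.pos_dist_of_ne (Ne.symm hwv)
  have p4 : 0 < G.dist u w := hc.pos_dist_of_ne (Ne.symm hwu)
  rcases h with h | h
  · have : G.dist u v = 1 := by omega
    exact SimpleGraph.dist_eq_one_iff_adj.mp this
  · have : G.dist v u = 1 := by omega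
    exact (SimpleGraph.dist_eq_one_iff_adj.mp this).symm

theorem stmt9 [Fintype V] (𝒢 : Set (SimpleGraph V)) (hn : 2 ≤ Fintype.card V)
    (hconn : ∀ G ∈ 𝒢, G.Connected) (hd : ∀ G ∈ 𝒢, G.diam = 2)
    (htf : ∃ G ∈ 𝒢, G.CliqueFree 3) :
    Fintype.card V - 2 ≤ SdS 𝒢 ∧ SdS 𝒢 ≤ Fintype.card V - 1 := by
  have hVpos : 0 < Fintype.card V := by omega
  obtain ⟨x⟩ : Nonempty V := Fintype.card_pos_iff.mp hVpos
  have hmem : Fintype.card V - 1 ∈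
      {n | ∃ S : Set V, S.ncard = n ∧ ∀ G ∈ 𝒢, IsStrongMetricGen G S} := by
    refine ⟨({x}ᶜ : Set V), ?_, fun G _ => gen_aux G x⟩
    have := Set.ncard_add_ncard_compl ({x} : Set V)
    simp only [Set.ncard_singleton, Nat.card_eq_fintype_card] at this
    omega
  constructor
  · apply le_csInf ⟨_, hmem⟩
    rintro m ⟨S, hS, hgen⟩
    by_contra hlt
    push_neg at hlt
    obtain ⟨G, hG, htfree⟩ := htf
    have hcompl : 2 < (Sᶜ : Set V).ncard := by
      have := Set.ncard_add_ncard_compl S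
      simp only [Nat.card_eq_fintype_card] at this
      omega
    classical
    obtain ⟨a, b, c, ha, hb, hc, hab, hac, hbc⟩ := (Set.two_lt_ncard_iff).mp hcompl
    have key : ∀ u v : V, u ∉ S → v ∉ S → u ≠ v → G.Adj u v := by
      intro u v hu hv huv
      obtain ⟨w, hwS, hres⟩ := hgen G hG u v huv
      exact adj_of_resolve (hconn G hG) (hd G hG) huv
        (fun h => hu (h ▸ hwS)) (fun h => hv (h ▸ hwS)) hres
    exact htfree {a, b, c}
      (SimpleGraph.is3Clique_triple_iff.mpr
        ⟨key a b ha hb hab, key a c ha hc hac, key b c hb hc hbc⟩)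
  · exact Nat.sInf_le hmem
end

section
/- If G is a connected graph whose complement G^c is connected, then any strong resolving cover of G (a set that is simultaneously a vertex cover and a strong metric generator of G) is a simultaneous strong metric generator for the family {G, G^c}. Consequently, Sd_s(G,G^c) ≤ min{β_s(G), β_s(G^c)}, where β_s denotes the minimum size of a strong resolving cover. -/
open SimpleGraph

variable {V : Type*}

lemma resolves_self_fst (G : SimpleGraph V) (u v : V) : StronglyResolves G u u v :=
  Or.inr (by simp)

lemma resolves_self_snd (G : SimpleGraph V) (u v : V) : StronglyResolves G v u v :=
  Or.inl (by simp)

lemma core_lemma [Fintype V] {G : SimpleGraph V} (hG : G.Connected) (hGc : Gᶜ.Connected)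
    {S : Set V} (cover : _root_.IsVertexCover G S) {u v w : V}
    (hu : u ∉ S) (hv : v ∉ S) (hne : u ≠ v) (hnadj : ¬ G.Adj u v)
    (hw : w ∈ S) (heq : G.dist u w = G.dist u v + G.dist v w) :
    ∃ y ∈ S, StronglyResolves Gᶜ y u v := by
  have hwv : w ≠ v := fun h => hv (h ▸ hw)
  have hdvw : G.dist v w ≠ 0 := fun h => hwv (hG.dist_eq_zero_iff.mp h).symm
  obtain ⟨p, hp⟩ := SimpleGraph.exists_walk_of_dist_ne_zero hdvw
  cases p with
  | nil => simp at hp; omega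
  | @cons _ y _ hadj q =>
    have hqlen : q.length + 1 = G.dist v w := by simpa using hp
    have hyw : G.dist y w ≤ q.length := SimpleGraph.dist_le q
    have huv0 : G.dist u v ≠ 0 := fun h => hne (hG.dist_eq_zero_iff.mp h)
    have huv1 : G.dist u v ≠ 1 := fun h => hnadj (SimpleGraph.dist_eq_one_iff_adj.mp h)
    have htri : G.dist u w ≤ G.dist u y + G.dist y w := hG.dist_triangle
    have huy : G.dist u v + 1 ≤ G.dist u y := by omega
    have hyS : y ∈ S := (cover v y hadj).resolve_left hv
    have huyne : u ≠ y := by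
      intro h; rw [h, SimpleGraph.dist_self] at huy; omega
    have huynadj : ¬ G.Adj u y := fun ha => by
      rw [← SimpleGraph.dist_eq_one_iff_adj] at ha; omega
    have aduv : Gᶜ.Adj u v := ⟨hne, hnadj⟩
    have aduy : Gᶜ.Adj u y := ⟨huyne, huynadj⟩
    have duv1 : Gᶜ.dist u v = 1 := SimpleGraph.dist_eq_one_iff_adj.mpr aduv
    have duy1 : Gᶜ.dist u y = 1 := SimpleGraph.dist_eq_one_iff_adj.mpr aduy
    have dvy : Gᶜ.dist v y = 2 := by
      have hle : Gᶜ.dist v y ≤ 2 := by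
        have := SimpleGraph.dist_le (SimpleGraph.Walk.cons aduv.symm
          (SimpleGraph.Walk.cons aduy SimpleGraph.Walk.nil))
        simpa using this
      have h0 : Gᶜ.dist v y ≠ 0 := fun h => hadj.ne (hGc.dist_eq_zero_iff.mp h)
      have h1 : Gᶜ.dist v y ≠ 1 := fun h =>
        (SimpleGraph.dist_eq_one_iff_adj.mp h).2 hadj
      omega
    refine ⟨y, hyS, Or.inr ?_⟩
    have dvu1 : Gᶜ.dist v u = 1 := by rw [SimpleGraph.dist_comm]; exact duv1
    rw [dvy, dvu1, duy1]

lemma gen_compl [Fintype V] {G : SimpleGraph V} (hG : G.Connected) (hGc : Gᶜ.Connected)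
    {S : Set V} (h : IsStrongResCover G S) : IsStrongMetricGen Gᶜ S := by
  intro u v hne
  by_cases hu : u ∈ S
  · exact ⟨u, hu, resolves_self_fst _ _ _⟩
  by_cases hv : v ∈ S
  · exact ⟨v, hv, resolves_self_snd _ _ _⟩
  have hnadj : ¬ G.Adj u v := fun ha => (h.1 u v ha).elim hu hv
  obtain ⟨w, hwS, hres⟩ := h.2 u v hne
  rcases hres with heq | heq
  · exact core_lemma hG hGc h.1 hu hv hne hnadj hwS heq
  · obtain ⟨y, hy, hr⟩ := core_lemma hG hGc h.1 hv hu hne.symm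
      (fun ha => hnadj ha.symm) hwS heq
    exact ⟨y, hy, hr.symm⟩

lemma univ_cover (G : SimpleGraph V) : IsStrongResCover G Set.univ :=
  ⟨fun _ _ _ => Or.inl trivial, fun u v _ => ⟨v, trivial, resolves_self_snd _ _ _⟩⟩

theorem stmt12 [Fintype V] (G : SimpleGraph V) (hG : G.Connected) (hGc : Gᶜ.Connected) :
    (∀ S : Set V, IsStrongResCover G S →
      (IsStrongMetricGen G S ∧ IsStrongMetricGen Gᶜ S)) ∧
    SdS {G, Gᶜ} ≤ min (betaS G) (betaS Gᶜ) := by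
  have hGcc : Gᶜᶜ.Connected := by rwa [compl_compl]
  have simG : ∀ S : Set V, IsStrongResCover G S →
      ∀ H ∈ ({G, Gᶜ} : Set (SimpleGraph V)), IsStrongMetricGen H S := by
    intro S hS H hH
    rcases hH with rfl | hH
    · exact hS.2
    · rw [Set.mem_singleton_iff] at hH; subst hH
      exact gen_compl hG hGc hS
  have simGc : ∀ S : Set V, IsStrongResCover Gᶜ S →
      ∀ H ∈ ({G, Gᶜ} : Set (SimpleGraph V)), IsStrongMetricGen H S := by
    intro S hS H hH
    rcases hH with rfl | hH
    · have := gen_compl hGc hGcc hS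
      rwa [compl_compl] at this
    · rw [Set.mem_singleton_iff] at hH; subst hH
      exact hS.2
  refine ⟨fun S hS => ⟨hS.2, gen_compl hG hGc hS⟩, ?_⟩
  have hle : ∀ (H : SimpleGraph V),
      (∀ S : Set V, IsStrongResCover H S →
        ∀ K ∈ ({G, Gᶜ} : Set (SimpleGraph V)), IsStrongMetricGen K S) →
      SdS {G, Gᶜ} ≤ betaS H := by
    intro H hsim
    have hBne : {n | ∃ S : Set V, S.ncard = n ∧ IsStrongResCover H S}.Nonempty :=
      ⟨(Set.univ : Set V).ncard, Set.univ, rfl, univ_cover H⟩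
    obtain ⟨S, hScard, hScov⟩ := Nat.sInf_mem hBne
    exact Nat.sInf_le ⟨S, hScard, hsim S hScov⟩
  exact le_min (hle G simG) (hle Gᶜ simGc)
end

section
/- Let G be a connected graph with connected complement of diameter 2. Then Sd_s(G,G^c) ≥ max{dim_s(G) + β̊(G), β(G)}, where β̊(G) is the vertex cover number of the interior subgraph of G (the subgraph induced by the non-boundary vertices, defined as 0 when V(G)=∂(G)). -/
open SimpleGraph

variable {V : Type*}

open Classical

/-- The vertex cover number of the interior subgraph of `G`. -/

noncomputable def intBeta (G : SimpleGraph V) : ℕ :=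
  if Boundary G = Set.univ then 0 else vcNum (G.induce (Boundary G)ᶜ)


section Aux

variable {V : Type*}

lemma exists_adj_dist_pred {G : SimpleGraph V} (hG : G.Connected) {v w : V} (h : v ≠ w) :
    ∃ x, G.Adj v x ∧ G.dist x w + 1 = G.dist v w := by
  obtain ⟨p, hp⟩ := hG.exists_walk_length_eq_dist v w
  cases p with
  | nil => exact absurd rfl h
  | @cons _ x _ a q =>
    refine ⟨x, a, ?_⟩
    have h1 : G.dist x w ≤ q.length := SimpleGraph.dist_le q
    have h2 : G.dist v w ≤ G.dist v x + G.dist x w := hG.dist_triangle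
    have h3 : G.dist v x = 1 := SimpleGraph.dist_eq_one_iff_adj.mpr a
    simp only [SimpleGraph.Walk.length_cons] at hp
    omega

lemma resolve_mmd {G : SimpleGraph V} (hG : G.Connected) {u v w : V}
    (hm : MutuallyMaxDistant G u v) (hr : StronglyResolves G w u v) : w = u ∨ w = v := by
  rcases hr with h | h
  · by_cases hwv : w = v
    · exact Or.inr hwv
    · exfalso
      obtain ⟨x, hadj, hx⟩ := exists_adj_dist_pred hG (fun hvw => hwv hvw.symm)
      have h1 : G.dist u w ≤ G.dist u x + G.dist x w := hG.dist_triangle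
      have h2 : G.dist u x ≤ G.dist u v := hm.2 x hadj
      omega
  · by_cases hwu : w = u
    · exact Or.inl hwu
    · exfalso
      obtain ⟨x, hadj, hx⟩ := exists_adj_dist_pred hG (fun huw => hwu huw.symm)
      have h1 : G.dist v w ≤ G.dist v x + G.dist x w := hG.dist_triangle
      have h2 : G.dist v x ≤ G.dist v u := hm.1 x hadj
      omega

lemma exists_md_ext [Fintype V] {G : SimpleGraph V} (hG : G.Connected) (v u : V) :
    ∃ u', MaxDistantFrom G u' v ∧ G.dist v u' = G.dist v u + G.dist u u' := by
  classical
  obtain ⟨u', hu'A, hmax⟩ := Finset.exists_max_image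
    (Finset.univ.filter fun x => G.dist v x = G.dist v u + G.dist u x) (fun x => G.dist v x)
    ⟨u, by simp⟩
  simp only [Finset.mem_filter, Finset.mem_univ, true_and] at hu'A
  refine ⟨u', ?_, hu'A⟩
  intro w hadj
  by_contra hlt
  push_neg at hlt
  have ha : G.dist u' w = 1 := SimpleGraph.dist_eq_one_iff_adj.mpr hadj
  have h1 : G.dist v w ≤ G.dist v u' + G.dist u' w := hG.dist_triangle
  have h2 : G.dist u w ≤ G.dist u u' + G.dist u' w := hG.dist_triangle
  have h3 : G.dist v w ≤ G.dist v u + G.dist u w := hG.dist_triangle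
  have hw : G.dist v w = G.dist v u + G.dist u w := by omega
  have := hmax w (by simp [hw])
  omega

lemma gen_of_srg_cover [Fintype V] {G : SimpleGraph V} (hG : G.Connected) {W : Set V}
    (hW : _root_.IsVertexCover (SRG G) W) : IsStrongMetricGen G W := by
  intro u v huv
  obtain ⟨u', hu'md, hu'eq⟩ := exists_md_ext hG v u
  obtain ⟨v', hv'md, hv'eq⟩ := exists_md_ext hG u' v
  have hc1 : G.dist v' v = G.dist v v' := SimpleGraph.dist_comm
  have hc2 : G.dist v' u' = G.dist u' v' := SimpleGraph.dist_comm
  have hc3 : G.dist u' v = G.dist v u' := SimpleGraph.dist_comm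
  have hc4 : G.dist u' u = G.dist u u' := SimpleGraph.dist_comm
  have hc5 : G.dist u v = G.dist v u := SimpleGraph.dist_comm
  have hu'md' : MaxDistantFrom G u' v' := by
    intro w hadj
    have h1 : G.dist v' w ≤ G.dist v' v + G.dist v w := hG.dist_triangle
    have h2 : G.dist v w ≤ G.dist v u' := hu'md w hadj
    omega
  have hne : u' ≠ v' := by
    intro h
    subst h
    have hz : G.dist u' u' = 0 := SimpleGraph.dist_self
    have h1 : G.dist u' v = 0 := by omega
    have h2 : G.dist v u' = 0 := by omega
    have h3 : G.dist v u = 0 := by omega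
    exact huv (hG.dist_eq_zero_iff.mp (by omega : G.dist u v = 0))
  rcases hW u' v' ⟨hne, hu'md', hv'md⟩ with hmem | hmem
  · exact ⟨u', hmem, Or.inr hu'eq⟩
  · refine ⟨v', hmem, Or.inl ?_⟩
    have h1 : G.dist u' v' ≤ G.dist u' u + G.dist u v' := hG.dist_triangle
    have h2 : G.dist u v' ≤ G.dist u v + G.dist v v' := hG.dist_triangle
    omega

end Aux

theorem stmt14 [Fintype V] (G : SimpleGraph V) (hG : G.Connected) (hGc : Gᶜ.Connected)
    (hd : Gᶜ.diam = 2) :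
    max (sdim G + intBeta G) (vcNum G) ≤ SdS {G, Gᶜ} := by
  classical
  have hSne : {n | ∃ S : Set V, S.ncard = n ∧ ∀ H ∈ ({G, Gᶜ} : Set (SimpleGraph V)), IsStrongMetricGen H S}.Nonempty := by
    refine ⟨(Set.univ : Set V).ncard, Set.univ, rfl, ?_⟩
    intro H _ a b hab
    exact ⟨b, Set.mem_univ b, Or.inl (by simp [SimpleGraph.dist_self])⟩
  refine le_csInf hSne ?_
  rintro n ⟨S, hcard, hgen⟩
  have hgenG : IsStrongMetricGen G S := hgen G (Or.inl rfl)
  have hgenGc : IsStrongMetricGen Gᶜ S := hgen Gᶜ (Or.inr rfl)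
  have hd2 : ∀ x y : V, Gᶜ.dist x y ≤ 2 := fun x y => by
    have := SimpleGraph.dist_le_diam (G := Gᶜ) (u := x) (v := y)
      (SimpleGraph.ediam_ne_top_of_diam_ne_zero (by omega))
    omega
  -- S is a vertex cover of G
  have hvc : _root_.IsVertexCover G S := by
    intro a b hab
    have hne : a ≠ b := hab.ne
    have hdist : Gᶜ.dist a b = 2 := by
      have h0 : Gᶜ.dist a b ≠ 0 := fun h => hne (hGc.dist_eq_zero_iff.mp h)
      have h1 : Gᶜ.dist a b ≠ 1 := fun h =>
        (SimpleGraph.dist_eq_one_iff_adj.mp h).2 hab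
      have := hd2 a b
      omega
    have hdist' : Gᶜ.dist b a = 2 := SimpleGraph.dist_comm.trans hdist
    have hmmd : MutuallyMaxDistant Gᶜ a b :=
      ⟨fun w _ => by have := hd2 b w; omega, fun w _ => by have := hd2 a w; omega⟩
    obtain ⟨w, hwS, hres⟩ := hgenGc a b hne
    rcases resolve_mmd hGc hmmd hres with rfl | rfl
    · exact Or.inl hwS
    · exact Or.inr hwS
  have hvcn : vcNum G ≤ n := Nat.sInf_le ⟨S, hcard, hvc⟩
  -- boundary part of S is a strong metric generator
  have hcovsrg : _root_.IsVertexCover (SRG G) (S ∩ Boundary G) := by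
    intro a b hab
    obtain ⟨w, hwS, hres⟩ := hgenG a b hab.1
    rcases resolve_mmd hG hab.2 hres with rfl | rfl
    · exact Or.inl ⟨hwS, ⟨b, hab.2⟩⟩
    · exact Or.inr ⟨hwS, ⟨a, hab.2.2, hab.2.1⟩⟩
  have hgenB : IsStrongMetricGen G (S ∩ Boundary G) := gen_of_srg_cover hG hcovsrg
  have hsdim : sdim G ≤ (S ∩ Boundary G).ncard := by
    refine Nat.sInf_le ⟨S ∩ Boundary G, rfl, ?_⟩
    intro H hH
    rw [Set.mem_singleton_iff] at hH
    exact hH ▸ hgenB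
  have hsplit : (S ∩ Boundary G).ncard + (S ∩ (Boundary G)ᶜ).ncard = S.ncard := by
    rw [← Set.ncard_union_eq (Set.disjoint_left.mpr (fun x hx hx' => hx'.2 hx.2))
      (Set.toFinite _) (Set.toFinite _), Set.inter_union_compl]
  have hiB : intBeta G ≤ (S ∩ (Boundary G)ᶜ).ncard := by
    by_cases hb : Boundary G = Set.univ
    · simp [intBeta, hb]
    · rw [intBeta, if_neg hb]
      have hTvc : _root_.IsVertexCover (G.induce (Boundary G)ᶜ)
          ((Subtype.val ⁻¹' S : Set ((Boundary G)ᶜ : Set V))) := by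
        intro x y hxy
        rcases hvc x y hxy with h | h
        · exact Or.inl h
        · exact Or.inr h
      have : vcNum (G.induce (Boundary G)ᶜ) ≤
          ((Subtype.val ⁻¹' S : Set ((Boundary G)ᶜ : Set V))).ncard :=
        Nat.sInf_le ⟨_, rfl, hTvc⟩
      refine this.trans (le_of_eq ?_)
      rw [← Set.ncard_image_of_injective _ (Subtype.coe_injective),
        Set.image_preimage_eq_inter_range, Subtype.range_coe]
  calc max (sdim G + intBeta G) (vcNum G)
      ≤ max ((S ∩ Boundary G).ncard + (S ∩ (Boundary G)ᶜ).ncard) n :=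
        max_le_max (Nat.add_le_add hsdim hiB) hvcn
    _ ≤ n := by rw [hsplit, hcard]; simp
end
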